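/- arXiv:2102.10309 — 3 statements merged into one kernel-verified Lean document; each statement's English description precedes it below -/
import Mathlib

section
/- Let $\ell \ge 1$, $\alpha > 0$, and $\hat{p}_1 \ne \hat{p}_2 \in \mathbb{R}$ with $\alpha/(\ell|\hat p_1 - \hat p_2|) \ge 1/2$. Then the unique minimizer of $g(x,y) = \frac{\ell}{2}(x - \hat{p}_1)^2 + \frac{\ell}{2}(y - \hat{p}_2)^2 + \alpha|x - y|$ is the constant pair $x^* = y^* = (\hat{p}_1 + \hat{p}_2)/2$, i.e., for large regularization the jump is completely removed and both values equal the midpoint. -/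
theorem twoValue_large_alpha_minimizer
    (ℓ : ℝ) (hℓ : 1 ≤ ℓ) (α p1 p2 : ℝ) (hα : 0 < α) (hne : p1 ≠ p2)
    (hreg : 1/2 ≤ α / (ℓ * |p1 - p2|))
    (g : ℝ → ℝ → ℝ)
    (hg : ∀ x y, g x y = ℓ/2 * (x - p1)^2 + ℓ/2 * (y - p2)^2 + α * |x - y|) :
    (∀ x y, g ((p1 + p2)/2) ((p1 + p2)/2) ≤ g x y)
    ∧ ∀ x y, (∀ u v, g x y ≤ g u v) → x = (p1 + p2)/2 ∧ y = (p1 + p2)/2 := by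
  have hℓ0 : (0:ℝ) < ℓ := lt_of_lt_of_le one_pos hℓ
  have hb : 0 < |p1 - p2| := abs_pos.mpr (sub_ne_zero.mpr hne)
  have halpha : ℓ * |p1 - p2| ≤ 2 * α := by
    rw [le_div_iff₀ (by positivity)] at hreg
    linarith
  have key : ∀ x y, g ((p1 + p2)/2) ((p1 + p2)/2) + ℓ/4 * (x - y)^2 ≤ g x y := by
    intro x y
    rw [hg, hg]
    have hmm : |((p1 + p2)/2) - ((p1 + p2)/2)| = (0:ℝ) := by simp
    rw [hmm]
    have h2 : (x - y) * (p1 - p2) ≤ |x - y| * |p1 - p2| := by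
      rw [← abs_mul]; exact le_abs_self _
    have h3 : (0:ℝ) ≤ |x - y| := abs_nonneg _
    nlinarith [mul_nonneg hℓ0.le (sq_nonneg (x - p1 + y - p2)),
      mul_le_mul_of_nonneg_left h2 hℓ0.le,
      mul_nonneg (by linarith : (0:ℝ) ≤ 2*α - ℓ*|p1 - p2|) h3]
  constructor
  · intro x y
    have := key x y
    nlinarith [sq_nonneg (x - y)]
  · intro x y hmin
    have h1 : g x y ≤ g ((p1 + p2)/2) ((p1 + p2)/2) := hmin _ _
    have h2 := key x y
    have hxy : x = y := by nlinarith [sq_nonneg (x - y)]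
    subst hxy
    have h3 : g x x = g ((p1 + p2)/2) ((p1 + p2)/2) := le_antisymm h1 (by nlinarith [key x x])
    rw [hg, hg] at h3
    simp only [sub_self, abs_zero, mul_zero] at h3
    have hx : x = (p1 + p2)/2 := by nlinarith [sq_nonneg (2*x - p1 - p2)]
    exact ⟨hx, hx⟩
end

section
/- Let $h \in \mathbb{R}^n$ be monotone nondecreasing and $\alpha \ge 0$. Then the minimizer $p^*$ of the discrete 1D $\ell^2$-TV functional $F(p) = \frac{1}{2}\sum_i (p_i - h_i)^2 + \alpha\sum_{i=1}^{n-1}|p_{i+1}-p_i|$ is also monotone nondecreasing. -/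
theorem l2TV_monotone_preserving
    (n : ℕ) (h : Fin n → ℝ) (hmono : Monotone h) (α : ℝ) (hα : 0 ≤ α)
    (F : (Fin n → ℝ) → ℝ)
    (hF : ∀ p, F p = (1/2) * ∑ i, (p i - h i)^2
        + α * ∑ i : Fin (n - 1),
            |p ⟨i.1+1, by have := i.isLt; omega⟩ - p ⟨i.1, by have := i.isLt; omega⟩|)
    (pstar : Fin n → ℝ) (hmin : ∀ p, F pstar ≤ F p) :
    Monotone pstar := by
  have key : ∀ k : ℕ, ∀ hk : k + 1 < n, pstar ⟨k, by omega⟩ ≤ pstar ⟨k+1, hk⟩ := by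
    intro k hk
    by_contra hcon
    push_neg at hcon
    set a : ℝ := pstar ⟨k, by omega⟩ with ha
    set b : ℝ := pstar ⟨k+1, hk⟩ with hb
    have hab : 0 < a - b := by linarith
    set m : ℝ := (a + b)/2 with hm
    set q : Fin n → ℝ := fun j => if j.1 = k ∨ j.1 = k + 1 then m else pstar j with hq
    have hqm : ∀ (jv : ℕ) (hj : jv < n), (jv = k ∨ jv = k + 1) → q ⟨jv, hj⟩ = m := by
      intro jv hj hc
      show (if jv = k ∨ jv = k + 1 then m else pstar ⟨jv, hj⟩) = m
      exact if_pos hc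
    have hqo : ∀ (jv : ℕ) (hj : jv < n), jv ≠ k → jv ≠ k + 1 →
        q ⟨jv, hj⟩ = pstar ⟨jv, hj⟩ := by
      intro jv hj h1 h2
      show (if jv = k ∨ jv = k + 1 then m else pstar ⟨jv, hj⟩) = pstar ⟨jv, hj⟩
      exact if_neg (fun hc => hc.elim h1 h2)
    have hqk : q ⟨k, by omega⟩ = m := hqm k (by omega) (Or.inl rfl)
    have hqk1 : q ⟨k+1, hk⟩ = m := hqm (k+1) hk (Or.inr rfl)
    -- fidelity difference
    set g : Fin n → ℝ := fun j => (q j - h j)^2 - (pstar j - h j)^2 with hg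
    have hne : (⟨k, by omega⟩ : Fin n) ≠ ⟨k+1, hk⟩ := by
      simp [Fin.ext_iff]
    have hgsum : ∑ j, g j = g ⟨k, by omega⟩ + g ⟨k+1, hk⟩ := by
      rw [← Finset.sum_pair hne]
      refine (Finset.sum_subset (Finset.subset_univ _) ?_).symm
      intro x _ hx
      simp only [Finset.mem_insert, Finset.mem_singleton] at hx
      push_neg at hx
      have h1 : x.1 ≠ k := by
        intro hh; exact hx.1 (Fin.ext hh)
      have h2 : x.1 ≠ k+1 := by
        intro hh; exact hx.2 (Fin.ext hh)
      have := hqo x.1 x.isLt h1 h2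
      simp only [hg]
      rw [show (⟨x.1, x.isLt⟩ : Fin n) = x from Fin.ext rfl] at this
      rw [this]
      ring
    have hh : h ⟨k, by omega⟩ ≤ h ⟨k+1, hk⟩ := by
      apply hmono
      simp [Fin.le_def]
    have hgbound : ∑ j, g j ≤ -((a-b)^2/2) := by
      rw [hgsum]
      simp only [hg, hqk, hqk1]
      rw [← ha, ← hb, hm]
      nlinarith [mul_nonneg hab.le (sub_nonneg.2 hh)]
    -- TV difference
    set t : Fin (n-1) → ℝ := fun e =>
      |q ⟨e.1+1, by have := e.isLt; omega⟩ - q ⟨e.1, by have := e.isLt; omega⟩|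
      - |pstar ⟨e.1+1, by have := e.isLt; omega⟩ - pstar ⟨e.1, by have := e.isLt; omega⟩| with ht
    set B : Fin (n-1) → ℝ := fun e =>
      (if e.1 + 1 = k then (a-b)/2 else 0) + (if e.1 = k then -(a-b) else 0)
      + (if e.1 = k+1 then (a-b)/2 else 0) with hB
    have hba : |b - a| = a - b := by
      rw [abs_sub_comm]; exact abs_of_pos (by linarith)
    have hptw : ∀ e : Fin (n-1), t e ≤ B e := by
      intro e
      have hel := e.isLt
      by_cases h1 : e.1 = k
      · have hq1 : q ⟨e.1, by omega⟩ = m := hqm _ _ (Or.inl h1)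
        have hq2 : q ⟨e.1+1, by omega⟩ = m := hqm _ _ (Or.inr (by omega))
        have hp1 : pstar ⟨e.1, by omega⟩ = a := by
          rw [ha]; exact congrArg pstar (Fin.ext h1)
        have hp2 : pstar ⟨e.1+1, by omega⟩ = b := by
          rw [hb]; exact congrArg pstar (Fin.mk_eq_mk.mpr (by omega))
        have hc2 : ¬ (e.1 + 1 = k) := by omega
        have hc3 : ¬ (e.1 = k+1) := by omega
        simp only [ht, hB, hq1, hq2, hp1, hp2, if_pos h1, if_neg hc2, if_neg hc3]
        rw [hba]
        simp
      · by_cases h2 : e.1 + 1 = k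
        · have hq1 : q ⟨e.1, by omega⟩ = pstar ⟨e.1, by omega⟩ := hqo _ _ (by omega) (by omega)
          have hq2 : q ⟨e.1+1, by omega⟩ = m := hqm _ _ (Or.inl h2)
          have hp2 : pstar ⟨e.1+1, by omega⟩ = a := by
            rw [ha]; exact congrArg pstar (Fin.ext h2)
          have hc3 : ¬ (e.1 = k+1) := by omega
          simp only [ht, hB, hq1, hq2, hp2, if_pos h2, if_neg h1, if_neg hc3]
          have hle := abs_sub_abs_le_abs_sub (m - pstar ⟨e.1, by omega⟩)
            (a - pstar ⟨e.1, by omega⟩)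
          have hma : |m - pstar ⟨e.1, by omega⟩ - (a - pstar ⟨e.1, by omega⟩)| = (a-b)/2 := by
            have hx : m - pstar ⟨e.1, by omega⟩ - (a - pstar ⟨e.1, by omega⟩) = -((a-b)/2) := by
              rw [hm]; ring
            rw [hx, abs_neg, abs_of_pos (by linarith)]
          rw [hma] at hle
          linarith
        · by_cases h3 : e.1 = k+1
          · have hq1 : q ⟨e.1, by omega⟩ = m := hqm _ _ (Or.inr h3)
            have hq2 : q ⟨e.1+1, by omega⟩ = pstar ⟨e.1+1, by omega⟩ :=
              hqo _ _ (by omega) (by omega)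
            have hp1 : pstar ⟨e.1, by omega⟩ = b := by
              rw [hb]; exact congrArg pstar (Fin.ext h3)
            simp only [ht, hB, hq1, hq2, hp1, if_pos h3, if_neg h1, if_neg h2]
            have hle := abs_sub_abs_le_abs_sub (pstar ⟨e.1+1, by omega⟩ - m)
              (pstar ⟨e.1+1, by omega⟩ - b)
            have hma : |pstar ⟨e.1+1, by omega⟩ - m - (pstar ⟨e.1+1, by omega⟩ - b)|
                = (a-b)/2 := by
              have hx : pstar ⟨e.1+1, by omega⟩ - m - (pstar ⟨e.1+1, by omega⟩ - b)
                  = -((a-b)/2) := by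
                rw [hm]; ring
              rw [hx, abs_neg, abs_of_pos (by linarith)]
            rw [hma] at hle
            linarith
          · have hq1 : q ⟨e.1, by omega⟩ = pstar ⟨e.1, by omega⟩ := hqo _ _ h1 h3
            have hq2 : q ⟨e.1+1, by omega⟩ = pstar ⟨e.1+1, by omega⟩ :=
              hqo _ _ (by omega) (by omega)
            simp only [ht, hB, hq1, hq2, if_neg h1, if_neg h2, if_neg h3]
            simp
    have hBsum : ∑ e, B e ≤ 0 := by
      simp only [hB]
      rw [Finset.sum_add_distrib, Finset.sum_add_distrib]
      have s2 : (∑ e : Fin (n-1), if e.1 = k then -(a-b) else 0) = -(a-b) := by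
        have hk' : k < n - 1 := by omega
        rw [show (∑ e : Fin (n-1), if e.1 = k then -(a-b) else 0)
            = ∑ e : Fin (n-1), if e = ⟨k, hk'⟩ then -(a-b) else 0 by
          refine Finset.sum_congr rfl (fun x _ => ?_)
          by_cases hx : x.1 = k
          · rw [if_pos hx, if_pos (Fin.ext hx)]
          · rw [if_neg hx, if_neg (fun hh => hx (by rw [hh]))]]
        simp
      have s1 : (∑ e : Fin (n-1), if e.1 + 1 = k then (a-b)/2 else 0) ≤ (a-b)/2 := by
        by_cases hk0 : k = 0
        · rw [Finset.sum_eq_zero (fun x _ => by rw [if_neg (by omega)])]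
          linarith
        · have hk' : k - 1 < n - 1 := by omega
          rw [show (∑ e : Fin (n-1), if e.1 + 1 = k then (a-b)/2 else 0)
              = ∑ e : Fin (n-1), if e = ⟨k-1, hk'⟩ then (a-b)/2 else 0 by
            refine Finset.sum_congr rfl (fun x _ => ?_)
            by_cases hx : x.1 + 1 = k
            · rw [if_pos hx, if_pos (Fin.ext (show x.1 = k - 1 by omega))]
            · rw [if_neg hx, if_neg (fun hh => hx (by rw [hh]; show k - 1 + 1 = k; omega))]]
          simp
      have s3 : (∑ e : Fin (n-1), if e.1 = k + 1 then (a-b)/2 else 0) ≤ (a-b)/2 := by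
        by_cases hk2 : k + 1 < n - 1
        · rw [show (∑ e : Fin (n-1), if e.1 = k + 1 then (a-b)/2 else 0)
              = ∑ e : Fin (n-1), if e = ⟨k+1, hk2⟩ then (a-b)/2 else 0 by
            refine Finset.sum_congr rfl (fun x _ => ?_)
            by_cases hx : x.1 = k + 1
            · rw [if_pos hx, if_pos (Fin.ext hx)]
            · rw [if_neg hx, if_neg (fun hh => hx (by rw [hh]))]]
          simp
        · rw [Finset.sum_eq_zero (fun x _ => by rw [if_neg (by have := x.isLt; omega)])]
          linarith
      linarith
    have htsum : ∑ e, t e ≤ 0 :=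
      le_trans (Finset.sum_le_sum (fun e _ => hptw e)) hBsum
    -- assemble
    have hFq : F q < F pstar := by
      rw [hF q, hF pstar]
      have e1 : ∑ j, (q j - h j)^2 = ∑ j, (pstar j - h j)^2 + ∑ j, g j := by
        rw [← Finset.sum_add_distrib]
        apply Finset.sum_congr rfl
        intro j _
        simp [hg]
      have e2 : (∑ e : Fin (n-1),
          |q ⟨e.1+1, by have := e.isLt; omega⟩ - q ⟨e.1, by have := e.isLt; omega⟩|)
          = (∑ e : Fin (n-1),
          |pstar ⟨e.1+1, by have := e.isLt; omega⟩ - pstar ⟨e.1, by have := e.isLt; omega⟩|)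
          + ∑ e, t e := by
        rw [← Finset.sum_add_distrib]
        apply Finset.sum_congr rfl
        intro e _
        simp [ht]
      rw [e1, e2]
      have hsq : 0 < (a-b)^2/2 := by positivity
      have hαt : α * (∑ e, t e) ≤ 0 := mul_nonpos_of_nonneg_of_nonpos hα htsum
      nlinarith
    exact absurd (hmin q) (not_le.2 hFq)
  -- propagate to full monotonicity
  have step : ∀ d : ℕ, ∀ x : ℕ, ∀ hx : x + d < n,
      pstar ⟨x, by omega⟩ ≤ pstar ⟨x + d, hx⟩ := by
    intro d
    induction d with
    | zero => intro x hx; exact le_refl _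
    | succ d ih =>
      intro x hx
      calc pstar ⟨x, by omega⟩ ≤ pstar ⟨x + d, by omega⟩ := ih x (by omega)
        _ ≤ pstar ⟨x + d + 1, by omega⟩ := key (x + d) (by omega)
        _ = pstar ⟨x + (d + 1), hx⟩ := congrArg pstar (Fin.mk_eq_mk.mpr (by omega))
  intro x y hxy
  have hxy' : x.1 ≤ y.1 := hxy
  have hst := step (y.1 - x.1) x.1 (by have := y.isLt; omega)
  have hy : (⟨x.1 + (y.1 - x.1), by have := y.isLt; omega⟩ : Fin n) = y :=
    Fin.mk_eq_mk.mpr (by omega)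
  have hx' : (⟨x.1, by have := y.isLt; omega⟩ : Fin n) = x := Fin.ext rfl
  rw [hy, hx'] at hst
  exact hst
end

section
/- Let $h \in \mathbb{R}^n$ be the signal with $h_i = \hat p_1$ for $i \le \ell$ and $h_i = \hat p_2$ for $i > \ell$ (where $n = 2\ell$), and let $p^*(\alpha)$ denote the unique minimizer of the 1D $\ell^2$-TV functional with parameter $\alpha > 0$. Then for $\alpha \ge \ell|\hat p_1 - \hat p_2|/2$, $p^*(\alpha)$ is the constant signal equal to $(\hat p_1 + \hat p_2)/2$; in particular $p^*(\alpha)$ is independent of $\alpha$ in this regime. -/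
open Finset

lemma tele (p : ℕ → ℝ) (a b : ℕ) (hab : a ≤ b) :
    |p b - p a| ≤ ∑ j ∈ Ico a b, |p (j+1) - p j| := by
  have h1 : p b - p a = ∑ j ∈ Ico a b, (p (j+1) - p j) := by
    rw [sum_Ico_eq_sub _ hab, sum_range_sub, sum_range_sub]
    ring
  rw [h1]
  exact abs_sum_le_sum_abs _ _

lemma pairineq (p1 p2 β x y : ℝ) (hβ : |p1 - p2| / 2 ≤ β) :
    (1/2)*(x - (p1+p2)/2)^2 + (1/2)*(y - (p1+p2)/2)^2 + (p1-p2)^2/4 ≤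
    (1/2)*(x - p1)^2 + (1/2)*(y - p2)^2 + β * |y - x| := by
  have h1 : |(p1 - p2) * (y - x)| = |p1 - p2| * |y - x| := abs_mul _ _
  have h2 := neg_abs_le ((p1 - p2) * (y - x))
  have h3 := abs_nonneg (y - x)
  nlinarith [mul_nonneg (sub_nonneg.2 hβ) h3]

lemma reidx (ℓ : ℕ) (f : ℕ → ℝ) :
    ∑ i ∈ range (2*ℓ), f i = ∑ i ∈ range ℓ, (f i + f (2*ℓ - 1 - i)) := by
  rw [two_mul, Finset.sum_range_add, sum_add_distrib]
  congr 1
  rw [← sum_range_reflect (fun i => f (ℓ + i)) ℓ]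
  refine sum_congr rfl fun i hi => ?_
  simp only [mem_range] at hi
  congr 1
  omega

open Finset in
theorem l2TV_saturation
    (ℓ : ℕ) (hℓ : 1 ≤ ℓ) (p1 p2 α : ℝ) (hα : 0 < α)
    (hsat : ℓ * |p1 - p2| / 2 ≤ α)
    (h : ℕ → ℝ) (hh : ∀ i, h i = if i < ℓ then p1 else p2)
    (F : (ℕ → ℝ) → ℝ)
    (hF : ∀ p, F p = (1/2) * ∑ i ∈ range (2*ℓ), (p i - h i)^2
        + α * ∑ i ∈ range (2*ℓ - 1), |p (i+1) - p i|)
    (pstar : ℕ → ℝ) (hmin : ∀ p, F pstar ≤ F p) :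
    ∀ i < 2*ℓ, pstar i = (p1 + p2)/2 := by
  set c := (p1 + p2)/2 with hc
  have hℓR : (0:ℝ) < ℓ := by exact_mod_cast hℓ
  set β := α / ℓ with hβdef
  have hβ : |p1 - p2| / 2 ≤ β := by
    rw [hβdef, le_div_iff₀ hℓR]
    nlinarith
  -- value of F at the constant c
  have hFc : F (fun _ => c) = ℓ * ((p1-p2)^2/4) := by
    rw [hF]
    have h1 : ∀ i ∈ range (2*ℓ), ((fun _ => c) i - h i)^2 = (p1-p2)^2/4 := by
      intro i _
      rw [hh i]
      split <;> (simp only [hc]; ring)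
    rw [sum_congr rfl h1, sum_const, card_range]
    simp only [sub_self, abs_zero, sum_const_zero, mul_zero, add_zero, nsmul_eq_mul]
    push_cast
    ring
  -- lower bound for F pstar
  set S := ∑ i ∈ range (2*ℓ), (pstar i - c)^2 with hSdef
  have key : (1/2) * S + ℓ * ((p1-p2)^2/4) ≤ F pstar := by
    rw [hF]
    set T := ∑ i ∈ range (2*ℓ-1), |pstar (i+1) - pstar i| with hT
    have hpair : ∀ i ∈ range ℓ, |pstar (2*ℓ-1-i) - pstar i| ≤ T := by
      intro i hi
      simp only [mem_range] at hi
      refine (tele pstar i (2*ℓ-1-i) (by omega)).trans ?_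
      rw [hT, range_eq_Ico]
      refine sum_le_sum_of_subset_of_nonneg ?_ (fun j _ _ => abs_nonneg _)
      intro j hj
      simp only [mem_Ico] at *
      omega
    have hsum : ∑ i ∈ range ℓ, |pstar (2*ℓ-1-i) - pstar i| ≤ ℓ * T := by
      calc ∑ i ∈ range ℓ, |pstar (2*ℓ-1-i) - pstar i| ≤ ∑ _i ∈ range ℓ, T :=
            sum_le_sum hpair
        _ = ℓ * T := by rw [sum_const, card_range, nsmul_eq_mul]
    have hαT : β * ∑ i ∈ range ℓ, |pstar (2*ℓ-1-i) - pstar i| ≤ α * T := by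
      have hβpos : 0 ≤ β := div_nonneg hα.le hℓR.le
      calc β * ∑ i ∈ range ℓ, |pstar (2*ℓ-1-i) - pstar i| ≤ β * (ℓ * T) :=
            mul_le_mul_of_nonneg_left hsum hβpos
        _ = α * T := by
            rw [hβdef]
            field_simp
    have hQ : ∑ i ∈ range (2*ℓ), (pstar i - h i)^2
        = ∑ i ∈ range ℓ, ((pstar i - p1)^2 + (pstar (2*ℓ-1-i) - p2)^2) := by
      rw [reidx ℓ]
      refine sum_congr rfl fun i hi => ?_
      simp only [mem_range] at hi
      rw [hh, hh, if_pos hi, if_neg (by omega)]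
    have hS : S = ∑ i ∈ range ℓ, ((pstar i - c)^2 + (pstar (2*ℓ-1-i) - c)^2) :=
      reidx ℓ _
    have hG : ∑ i ∈ range ℓ, ((1/2)*(pstar i - c)^2 + (1/2)*(pstar (2*ℓ-1-i) - c)^2
          + (p1-p2)^2/4)
        ≤ ∑ i ∈ range ℓ, ((1/2)*(pstar i - p1)^2 + (1/2)*(pstar (2*ℓ-1-i) - p2)^2
          + β * |pstar (2*ℓ-1-i) - pstar i|) :=
      sum_le_sum fun i _ => pairineq p1 p2 β _ _ hβ
    have e1 : ∑ i ∈ range ℓ, ((1/2)*(pstar i - c)^2 + (1/2)*(pstar (2*ℓ-1-i) - c)^2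
          + (p1-p2)^2/4) = (1/2) * S + ℓ * ((p1-p2)^2/4) := by
      rw [hS]
      simp only [mul_add, mul_sum, sum_add_distrib, sum_const, card_range, nsmul_eq_mul]
    have e2 : ∑ i ∈ range ℓ, ((1/2)*(pstar i - p1)^2 + (1/2)*(pstar (2*ℓ-1-i) - p2)^2
          + β * |pstar (2*ℓ-1-i) - pstar i|)
        = (1/2) * ∑ i ∈ range (2*ℓ), (pstar i - h i)^2
          + β * ∑ i ∈ range ℓ, |pstar (2*ℓ-1-i) - pstar i| := by
      rw [hQ]
      simp only [mul_add, mul_sum, sum_add_distrib]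
    rw [e1, e2] at hG
    linarith
  have hle := hmin (fun _ => c)
  rw [hFc] at hle
  have hS0 : S ≤ 0 := by linarith
  have hSnn : 0 ≤ S := sum_nonneg fun i _ => sq_nonneg _
  have hSzero : S = 0 := le_antisymm hS0 hSnn
  intro i hi
  have := (sum_eq_zero_iff_of_nonneg (fun j _ => sq_nonneg (pstar j - c))).1 hSzero i
    (mem_range.2 hi)
  have := pow_eq_zero_iff (n := 2) (by norm_num) |>.1 this
  linarith [this]
end
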